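/- Let K be a finite field of characteristic 2, σ an automorphism of K of order 2, F a subfield of K with σ(F)=F, V a vector space over K, β : V×V → K a nonzero hermitian form with respect to σ, and L : K → F a nonzero F-linear map. Then the form Lβ = L∘β : V×V → F is alternating if and only if F ⊆ Fix(σ) and L∘σ = L. -/
import Mathlib


/-- Let `K` be a finite field of characteristic `2`, `σ` an automorphism
of `K` of order `2`, `F` a subfield of `K` with `σ(F) = F`, `V` a vector space over `K`,
`β : V × V → K` a nonzero hermitian form with respect to `σ`, and `L : K → F` a nonzero
`F`-linear map.  Then the form `Lβ = L ∘ β : V × V → F` is alternating if and only if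
`F ⊆ Fix(σ)` and `L ∘ σ = L`. -/
theorem stmt_5 {K : Type*} [Field K] [Fintype K] (hchar : ringChar K = 2)
    (σ : K ≃+* K) (hσ2 : ∀ x : K, σ (σ x) = x) (hσne : σ ≠ RingEquiv.refl K)
    (F : Subfield K) (hσF : ∀ x : K, σ x ∈ F ↔ x ∈ F)
    {V : Type*} [AddCommGroup V] [Module K V]
    (β : V → V → K)
    (hβadd₁ : ∀ u v w : V, β (u + v) w = β u w + β v w)
    (hβadd₂ : ∀ u v w : V, β u (v + w) = β u v + β u w)
    (hβsmul₁ : ∀ (a : K) (v w : V), β (a • v) w = a * β v w)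
    (hβsmul₂ : ∀ (a : K) (v w : V), β v (a • w) = σ a * β v w)
    (hβherm : ∀ v w : V, β w v = σ (β v w))
    (hβne : ∃ v w : V, β v w ≠ 0)
    (L : K → F)
    (hLadd : ∀ x y : K, L (x + y) = L x + L y)
    (hLsmul : ∀ (c : F) (x : K), L ((c : K) * x) = c * L x)
    (hL0 : ∃ x : K, L x ≠ 0) :
    (∀ v : V, L (β v v) = 0) ↔
      ((∀ x : K, x ∈ F → σ x = x) ∧ ∀ x : K, L (σ x) = L x) := by
  -- characteristic two facts
  haveI : CharP K 2 := hchar ▸ ringChar.charP K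
  have h2K : ∀ a : K, a + a = 0 := fun a => CharTwo.add_self_eq_zero a
  have h2F : ∀ a : F, a + a = 0 := by
    intro a
    have h : ((a + a : F) : K) = ((0 : F) : K) := by push_cast; exact h2K a
    exact_mod_cast h
  have hnegK : ∀ a : K, -a = a := fun a => neg_eq_of_add_eq_zero_left (h2K a)
  have hnegF : ∀ a : F, -a = a := fun a => neg_eq_of_add_eq_zero_left (h2F a)
  obtain ⟨t, ht⟩ : ∃ t : K, σ t ≠ t := by
    by_contra h
    push_neg at h
    exact hσne (RingEquiv.ext h)
  constructor
  · intro halt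
    obtain ⟨v, w, ha0⟩ := hβne
    set a0 := β v w with ha0def
    -- step 1 : L x + L (σ x) = 0 for all x
    have key : ∀ x : K, L x + L (σ x) = 0 := by
      intro x
      set c := σ (x * a0⁻¹) with hc
      have hσc : σ c = x * a0⁻¹ := hσ2 _
      have h1 : β v (c • w) = x := by
        rw [hβsmul₂, hσc, ← ha0def]
        field_simp
      have h2 : β (c • w) v = σ x := by
        rw [hβherm, h1]
      have hexp : β (v + c • w) (v + c • w)
          = β v v + (x + (σ x + β (c • w) (c • w))) := by
        rw [hβadd₁, hβadd₂, hβadd₂, h1, h2]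
        ring
      have := halt (v + c • w)
      rw [hexp, hLadd, hLadd, hLadd, halt v, halt (c • w)] at this
      calc L x + L (σ x) = 0 + (L x + (L (σ x) + 0)) := by ring
        _ = 0 := this
    have hLσ : ∀ x : K, L (σ x) = L x := by
      intro x
      have e1 : L (σ x) = -(L x) := eq_neg_of_add_eq_zero_right (key x)
      rw [e1, hnegF]
    refine ⟨?_, hLσ⟩
    intro c hc
    obtain ⟨x0, hx0⟩ := hL0
    have hc' : σ c ∈ F := (hσF c).mpr hc
    have e1 : (⟨σ c, hc'⟩ : F) * L x0 = (⟨c, hc⟩ : F) * L x0 := by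
      rw [← hLsmul ⟨σ c, hc'⟩ x0]
      have h3 : σ c * x0 = σ (c * σ x0) := by
        rw [map_mul, hσ2]
      rw [h3]
      push_cast
      rw [hLσ, hLsmul ⟨c, hc⟩ (σ x0), hLσ]
    have := mul_right_cancel₀ hx0 e1
    exact congrArg Subtype.val this
  · rintro ⟨hF, hLσ⟩ v
    set d := β v v with hd
    have hσd : σ d = d := (hβherm v v).symm
    set s := t + σ t with hs
    have hs0 : s ≠ 0 := by
      intro h
      apply ht
      rw [hs] at h
      have h' : σ t = -t := eq_neg_of_add_eq_zero_right h
      rw [h', hnegK]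
    have hσs : σ s = s := by
      rw [hs, map_add, hσ2]; ring
    set x := d * t * s⁻¹ with hx
    have hσx : σ x = d * σ t * s⁻¹ := by
      rw [hx, map_mul, map_mul, map_inv₀, hσd, hσs]
    have hsum : x + σ x = d := by
      rw [hσx, hx]
      field_simp
      ring
    have : L d = L x + L (σ x) := by rw [← hLadd, hsum]
    rw [this, hLσ]
    exact h2F (L x)
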